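/- Let q be a prime power and m ≥ 1. For α ∈ F_{q^m} and i ≥ 0, set N_i(α) := α^{(q^i−1)/(q−1)} (the i-th truncated norm, with N_0(α) = 1). Let α_1, …, α_s ∈ F_{q^m} be such that the s×s matrix with (i, j) entry N_{i−1}(α_j) is invertible (i.e., the set Ω = {α_1, …, α_s} is P-independent). Let Z be a proper subset of Ω with |Z| = d, and suppose f_0, …, f_d ∈ F_{q^m} with f_d = 1 satisfy Σ_{i=0}^{d} f_i N_i(ζ) = 0 for all ζ ∈ Z (i.e., the monic skew polynomial of degree d with these coefficients vanishes on Z under remainder evaluation). Then for every α ∈ Ω ∖ Z one has Σ_{i=0}^{d} f_i N_i(α) ≠ 0. -/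

import Mathlib

open Finset

private def Estep {K : Type*} [Field K] (q : ℕ) (c : ℕ → K) (γ : K) : ℕ → K
  | 0 => -(γ * c 0)
  | (i+1) => c i ^ q - γ * c (i+1)

private lemma Estep_eval {K : Type*} [Field K] (q : ℕ) (hq1 : 1 ≤ q)
    (hF : ∀ x y : K, (x + y) ^ q = x ^ q + y ^ q)
    (c : ℕ → K) (γ a : K) (n : ℕ) :
    ∑ i ∈ range (n+1), Estep q c γ i * a ^ (∑ k ∈ range i, q ^ k)
      = a * (∑ i ∈ range n, c i * a ^ (∑ k ∈ range i, q ^ k)) ^ q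
        - γ * ∑ i ∈ range (n+1), c i * a ^ (∑ k ∈ range i, q ^ k) := by
  have hB : ∀ i, Estep q c γ i * a ^ (∑ k ∈ range i, q ^ k)
      = (if h : i = 0 then 0 else c (i-1) ^ q * a ^ (∑ k ∈ range i, q ^ k))
        - γ * (c i * a ^ (∑ k ∈ range i, q ^ k)) := by
    intro i
    cases i with
    | zero => simp [Estep]
    | succ i => simp [Estep]; ring
  simp_rw [hB, Finset.sum_sub_distrib, ← Finset.mul_sum]
  congr 1
  rw [Finset.sum_range_succ']
  simp only [Nat.add_sub_cancel, reduceDIte, add_zero]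
  have he : ∀ i : ℕ, (∑ k ∈ range (i+1), q ^ k) = q * (∑ k ∈ range i, q ^ k) + 1 := by
    intro i
    rw [Finset.sum_range_succ', Finset.mul_sum]
    simp [pow_succ, mul_comm]
  have hFs : ∀ (t : Finset ℕ) (g : ℕ → K), (∑ i ∈ t, g i) ^ q = ∑ i ∈ t, g i ^ q := by
    intro t g
    induction t using Finset.induction_on with
    | empty => simp [zero_pow (by omega : q ≠ 0)]
    | insert _ _ hnot ih => rw [Finset.sum_insert hnot, Finset.sum_insert hnot, hF, ih]
  have key : ∀ i ∈ range n,
      (if h : i + 1 = 0 then 0 else c i ^ q * a ^ (∑ k ∈ range (i+1), q ^ k))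
      = a * (c i * a ^ (∑ k ∈ range i, q ^ k)) ^ q := by
    intro i _
    rw [dif_neg (Nat.succ_ne_zero i), he i, pow_add, pow_one, pow_mul',
      mul_pow]; ring
  rw [Finset.sum_congr rfl key, hFs, ← Finset.mul_sum]



/-- Lemma: let `Ω = {α_1, …, α_s} ⊆ F_{q^m}` be P-independent (its σ-Vandermonde matrix,
with entries the truncated norms `N_{i−1}(α_j) = α_j^{(q^{i−1}−1)/(q−1)}`, is invertible).
If a monic skew polynomial of degree `d = |Z|` vanishes (under remainder evaluation) on a
proper subset `Z ⊂ Ω`, then it does not vanish at any point of `Ω ∖ Z`. -/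
theorem minimal_poly_not_vanish_outside
    (q m s d : ℕ) (Fq K : Type*) [Field Fq] [Fintype Fq] (hq : Fintype.card Fq = q)
    [Field K] [Algebra Fq K] (hm : Module.finrank Fq K = m) (hm1 : 1 ≤ m)
    (α : Fin s → K)
    (hV : IsUnit (Matrix.of fun i j : Fin s =>
      α j ^ ((q ^ (i : ℕ) - 1) / (q - 1))).det)
    (Z : Finset (Fin s)) (hZne : Z ≠ Finset.univ) (hZcard : Z.card = d)
    (f : ℕ → K) (hmonic : f d = 1)
    (hvanish : ∀ j ∈ Z,
      ∑ i ∈ Finset.range (d + 1), f i * α j ^ ((q ^ i - 1) / (q - 1)) = 0) :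
    ∀ j : Fin s, j ∉ Z →
      ∑ i ∈ Finset.range (d + 1), f i * α j ^ ((q ^ i - 1) / (q - 1)) ≠ 0 := by
  classical
  intro j hj hcontra
  -- basic numerics
  have hq2 : 2 ≤ q := hq ▸ Fintype.one_lt_card
  have hgeom : ∀ i : ℕ, (q ^ i - 1) / (q - 1) = ∑ k ∈ range i, q ^ k :=
    fun i => (Nat.geomSum_eq hq2 i).symm
  -- Frobenius
  set p := ringChar Fq with hp
  haveI : CharP Fq p := ringChar.charP Fq
  obtain ⟨n, hpprime, hcard⟩ := FiniteField.card Fq p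
  haveI : CharP K p := charP_of_injective_algebraMap (algebraMap Fq K).injective p
  haveI : Fact p.Prime := ⟨hpprime⟩
  have hqpn : q = p ^ (n : ℕ) := hq ▸ hcard
  have hF : ∀ x y : K, (x + y) ^ q = x ^ q + y ^ q := by
    intro x y; rw [hqpn]; exact add_pow_char_pow x y p n
  -- cardinalities
  have hds : d + 1 ≤ s := by
    have := Finset.card_lt_card (lt_of_le_of_ne (Finset.subset_univ Z) hZne)
    simpa [hZcard, Finset.card_univ] using this
  -- the inductive construction
  have main : ∀ T : Finset (Fin s), ∃ c : ℕ → K,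
      (∀ i, d + T.card < i → c i = 0) ∧ c (d + T.card) = 1 ∧
      ∀ j' ∈ insert j Z ∪ T,
        ∑ i ∈ range (d + T.card + 1), c i * α j' ^ (∑ k ∈ range i, q ^ k) = 0 := by
    intro T
    induction T using Finset.induction_on with
    | empty =>
      refine ⟨fun i => if i ≤ d then f i else 0, ?_, by simp [hmonic], ?_⟩
      · intro i hi; simp at hi ⊢; omega
      · intro j' hj'
        have : ∑ i ∈ range (d + 1), f i * α j' ^ ((q ^ i - 1) / (q - 1)) = 0 := by
          simp only [Finset.union_empty, Finset.mem_insert] at hj'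
          rcases hj' with rfl | h
          · exact hcontra
          · exact hvanish j' h
        simp only [Finset.card_empty, add_zero]
        rw [← this]
        refine Finset.sum_congr rfl fun i hi => ?_
        rw [Finset.mem_range] at hi
        rw [if_pos (by omega), hgeom]
    | @insert b T hb ih =>
      obtain ⟨c, hsupp, hmon, heval⟩ := ih
      set D := d + T.card with hD
      set v := ∑ i ∈ range (D + 1), c i * α b ^ (∑ k ∈ range i, q ^ k) with hv
      set γ := if v = 0 then 0 else α b * v ^ q * v⁻¹ with hγ
      have hγv : γ * v = α b * v ^ q := by
        rcases eq_or_ne v 0 with h | h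
        · simp [hγ, h, zero_pow (by omega : q ≠ 0)]
        · rw [hγ, if_neg h]; field_simp
      refine ⟨Estep q c γ, ?_, ?_, ?_⟩
      · intro i hi
        rw [Finset.card_insert_of_notMem hb] at hi
        match i, hi with
        | (i+1), hi =>
          show c i ^ q - γ * c (i+1) = 0
          rw [hsupp i (by omega), hsupp (i+1) (by omega),
            zero_pow (by omega : q ≠ 0), mul_zero, sub_zero]
      · rw [Finset.card_insert_of_notMem hb]
        have harr : d + (T.card + 1) = D + 1 := by omega
        rw [harr]
        show c D ^ q - γ * c (D + 1) = 1
        rw [hmon, hsupp (D+1) (by omega), one_pow, mul_zero, sub_zero]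
      · intro j' hj'
        rw [Finset.card_insert_of_notMem hb]
        have harr : d + (T.card + 1) + 1 = (D + 1) + 1 := by omega
        rw [harr, Estep_eval q (by omega) hF c γ (α j') (D + 1)]
        have hdrop : ∑ i ∈ range (D + 1 + 1), c i * α j' ^ (∑ k ∈ range i, q ^ k)
            = ∑ i ∈ range (D + 1), c i * α j' ^ (∑ k ∈ range i, q ^ k) := by
          rw [Finset.sum_range_succ, hsupp (D+1) (by omega), zero_mul, add_zero]
        rw [hdrop]
        rcases Finset.mem_union.mp hj' with h | h
        · have h0 := heval j' (Finset.mem_union_left _ h)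
          rw [h0]; simp [zero_pow (by omega : q ≠ 0)]
        · rcases Finset.mem_insert.mp h with rfl | h
          · rw [← hv, ← hγv]; ring
          · have h0 := heval j' (Finset.mem_union_right _ h)
            rw [h0]; simp [zero_pow (by omega : q ≠ 0)]
  -- apply with the complement
  obtain ⟨c, hsupp, hmon, heval⟩ := main (insert j Z)ᶜ
  have hcardc : (insert j Z)ᶜ.card = s - (d + 1) := by
    rw [Finset.card_compl, Finset.card_insert_of_notMem hj, hZcard, Fintype.card_fin]
  have hDs : d + (insert j Z)ᶜ.card = s - 1 := by rw [hcardc]; omega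
  have hall : ∀ j' : Fin s,
      ∑ i ∈ range s, c i * α j' ^ (∑ k ∈ range i, q ^ k) = 0 := by
    intro j'
    have := heval j' (by simp [Finset.mem_union]; tauto)
    rwa [hDs, Nat.sub_add_cancel (by omega : 1 ≤ s)] at this
  -- contradiction with invertibility
  set M : Matrix (Fin s) (Fin s) K := Matrix.of fun i j : Fin s =>
      α j ^ ((q ^ (i : ℕ) - 1) / (q - 1)) with hM
  set w : Fin s → K := fun i => c i with hw
  have hwM : Matrix.vecMul w M = 0 := by
    funext j'
    rw [Matrix.vecMul, dotProduct]
    have : ∀ i : Fin s, w i * M i j' = c (i : ℕ) * α j' ^ (∑ k ∈ range (i : ℕ), q ^ k) := by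
      intro i; simp [hw, hM, hgeom]
    rw [Finset.sum_congr rfl fun i _ => this i, Fin.sum_univ_eq_sum_range
      (fun i => c i * α j' ^ (∑ k ∈ range i, q ^ k)) s, hall j']
    rfl
  have hw0 : w = 0 := by
    have h1 : Matrix.vecMul w (M * M⁻¹) = 0 := by
      rw [← Matrix.vecMul_vecMul, hwM, Matrix.zero_vecMul]
    rwa [Matrix.mul_nonsing_inv M hV, Matrix.vecMul_one] at h1
  have : c (s - 1) = 1 := hDs ▸ hmon
  have hz : c (s - 1) = 0 := by
    have := congrFun hw0 ⟨s - 1, by omega⟩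
    simpa [hw] using this
  rw [hz] at this
  exact one_ne_zero this.symm
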